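/- With the setup of the previous statement, if additionally σ_min(E[h(x)h(x)ᵀ]) ≥ c₁ > 0 and σ_max(E[h*(x)h*(x)ᵀ]) ≤ c₂, then the infimum of v ↦ E[(h(x)ᵀv - h*(x)ᵀv*)²] is achieved at a point v with ‖v‖₂ ≤ ‖v*‖₂·√(c₂/c₁). -/

import Mathlib

open MeasureTheory Matrix
open scoped BigOperators

lemma dot_mul_dot {X : Type*} {k : ℕ} (f g : X → Fin k → ℝ) (u w : Fin k → ℝ) (x : X) :
    (f x ⬝ᵥ u) * (g x ⬝ᵥ w) = ∑ i, ∑ j, (u i * w j) * (f x i * g x j) := by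
  simp only [dotProduct, Finset.sum_mul_sum]
  exact Finset.sum_congr rfl fun i _ => Finset.sum_congr rfl fun j _ => by ring

lemma integrable_dot_mul_dot {X : Type*} [MeasurableSpace X] {μ : Measure X} {k : ℕ}
    (f g : X → Fin k → ℝ) (u w : Fin k → ℝ)
    (hint : ∀ i j, Integrable (fun x => f x i * g x j) μ) :
    Integrable (fun x => (f x ⬝ᵥ u) * (g x ⬝ᵥ w)) μ := by
  have he : (fun x => (f x ⬝ᵥ u) * (g x ⬝ᵥ w))
      = fun x => ∑ i, ∑ j, (u i * w j) * (f x i * g x j) :=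
    funext fun x => dot_mul_dot f g u w x
  rw [he]
  exact integrable_finset_sum _ fun i _ => integrable_finset_sum _ fun j _ =>
    (hint i j).const_mul _

lemma integral_dot_mul_dot {X : Type*} [MeasurableSpace X] {μ : Measure X} {k : ℕ}
    (f g : X → Fin k → ℝ) (u w : Fin k → ℝ)
    (hint : ∀ i j, Integrable (fun x => f x i * g x j) μ) :
    ∫ x, (f x ⬝ᵥ u) * (g x ⬝ᵥ w) ∂μ = ∑ i, ∑ j, (u i * w j) * ∫ x, f x i * g x j ∂μ := by
  simp_rw [dot_mul_dot f g u w]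
  rw [integral_finset_sum _ fun i _ => integrable_finset_sum _ fun j _ => (hint i j).const_mul _]
  refine Finset.sum_congr rfl fun i _ => ?_
  rw [integral_finset_sum _ fun j _ => (hint i j).const_mul _]
  exact Finset.sum_congr rfl fun j _ => integral_const_mul _ _

lemma dot_mulVec_eq {k : ℕ} (M : Matrix (Fin k) (Fin k) ℝ) (u w : Fin k → ℝ) :
    u ⬝ᵥ M.mulVec w = ∑ i, ∑ j, (u i * w j) * M i j := by
  simp only [dotProduct, Matrix.mulVec, Finset.mul_sum]
  exact Finset.sum_congr rfl fun i _ => Finset.sum_congr rfl fun j _ => by ring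

/-- Under eigenvalue bounds `σ_min(E[h hᵀ]) ≥ c₁ > 0` and `σ_max(E[h* h*ᵀ]) ≤ c₂`,
the infimum of `v ↦ E[(h(x)ᵀv − h*(x)ᵀv*)²]` is achieved at a point `v` with
`‖v‖₂ ≤ ‖v*‖₂·√(c₂/c₁)`. -/
theorem inf_linear_approx_achieved_in_ball {d k : ℕ}
    (μ : Measure (Fin d → ℝ)) [IsProbabilityMeasure μ]
    (h hstar : (Fin d → ℝ) → (Fin k → ℝ))
    (hmeas : Measurable h) (hmeas' : Measurable hstar)
    (hint : ∀ i j, Integrable (fun x => h x i * h x j) μ)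
    (hint' : ∀ i j, Integrable (fun x => hstar x i * hstar x j) μ)
    (hintc : ∀ i j, Integrable (fun x => hstar x i * h x j) μ)
    (Fhh Fss Fsh G : Matrix (Fin k) (Fin k) ℝ)
    (hFhh : Fhh = Matrix.of fun i j => ∫ x, h x i * h x j ∂μ)
    (hFss : Fss = Matrix.of fun i j => ∫ x, hstar x i * hstar x j ∂μ)
    (hFsh : Fsh = Matrix.of fun i j => ∫ x, hstar x i * h x j ∂μ)
    (hG1 : Fhh * G * Fhh = Fhh) (hG2 : G * Fhh * G = G)
    (hG3 : (Fhh * G)ᵀ = Fhh * G) (hG4 : (G * Fhh)ᵀ = G * Fhh)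
    (c₁ c₂ : ℝ) (hc₁ : 0 < c₁) (hc₂ : 0 < c₂)
    (hmin : ∀ u : Fin k → ℝ, c₁ * (∑ i, u i ^ 2) ≤ u ⬝ᵥ Fhh.mulVec u)
    (hmax : ∀ u : Fin k → ℝ, u ⬝ᵥ Fss.mulVec u ≤ c₂ * (∑ i, u i ^ 2))
    (vstar : Fin k → ℝ) :
    ∃ v : Fin k → ℝ,
      Real.sqrt (∑ i, v i ^ 2) ≤ Real.sqrt (∑ i, vstar i ^ 2) * Real.sqrt (c₂ / c₁) ∧
      ∀ u : Fin k → ℝ,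
        (∫ x, ((h x ⬝ᵥ v) - (hstar x ⬝ᵥ vstar)) ^ 2 ∂μ) ≤
          ∫ x, ((h x ⬝ᵥ u) - (hstar x ⬝ᵥ vstar)) ^ 2 ∂μ := by
  classical
  set b : Fin k → ℝ := Fshᵀ.mulVec vstar with hb
  set v : Fin k → ℝ := G.mulVec b with hv
  -- cross integrability
  have hintc' : ∀ i j, Integrable (fun x => h x i * hstar x j) μ := fun i j => by
    simpa [mul_comm] using hintc j i
  -- key expansion of the objective
  have key : ∀ u : Fin k → ℝ,
      (∫ x, ((h x ⬝ᵥ u) - (hstar x ⬝ᵥ vstar)) ^ 2 ∂μ)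
        = u ⬝ᵥ Fhh.mulVec u - 2 * (u ⬝ᵥ b) + vstar ⬝ᵥ Fss.mulVec vstar := by
    intro u
    have e1 : ∀ x, ((h x ⬝ᵥ u) - (hstar x ⬝ᵥ vstar)) ^ 2
        = (h x ⬝ᵥ u) * (h x ⬝ᵥ u) - 2 * ((h x ⬝ᵥ u) * (hstar x ⬝ᵥ vstar))
          + (hstar x ⬝ᵥ vstar) * (hstar x ⬝ᵥ vstar) := fun x => by ring
    have I1 := integrable_dot_mul_dot (μ := μ) h h u u hint
    have I2 := integrable_dot_mul_dot (μ := μ) h hstar u vstar hintc'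
    have I3 := integrable_dot_mul_dot (μ := μ) hstar hstar vstar vstar hint'
    have I12 : Integrable (fun x => (h x ⬝ᵥ u) * (h x ⬝ᵥ u)
        - 2 * ((h x ⬝ᵥ u) * (hstar x ⬝ᵥ vstar))) μ := I1.sub (I2.const_mul 2)
    simp_rw [e1]
    rw [integral_add I12 I3,
      integral_sub I1 (I2.const_mul 2), integral_const_mul,
      integral_dot_mul_dot (μ := μ) h h u u hint,
      integral_dot_mul_dot (μ := μ) h hstar u vstar hintc',
      integral_dot_mul_dot (μ := μ) hstar hstar vstar vstar hint']
    congr 1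
    · congr 1
      · rw [dot_mulVec_eq, hFhh]; rfl
      · congr 1
        rw [hb, dot_mulVec_eq, hFsh]
        refine Finset.sum_congr rfl fun i _ => Finset.sum_congr rfl fun j _ => ?_
        simp only [Matrix.transpose_apply, Matrix.of_apply]
        congr 1
        exact integral_congr_ae (Filter.Eventually.of_forall fun x => mul_comm _ _)
    · rw [dot_mulVec_eq, hFss]; rfl
  -- Fhh is positive definite, hence a unit
  have hsym : Fhhᵀ = Fhh := by
    rw [hFhh]; ext i j
    simp only [Matrix.transpose_apply, Matrix.of_apply]
    exact integral_congr_ae (Filter.Eventually.of_forall fun x => mul_comm _ _)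
  have hpd : Fhh.PosDef := by
    refine Matrix.PosDef.of_dotProduct_mulVec_pos (by simpa [Matrix.IsHermitian] using hsym) fun x hx => ?_
    have hxs : 0 < ∑ i, x i ^ 2 := by
      rcases Function.ne_iff.mp hx with ⟨i, hi⟩
      exact Finset.sum_pos' (fun j _ => sq_nonneg _)
        ⟨i, Finset.mem_univ i, pow_two_pos_of_ne_zero hi⟩
    have := hmin x
    simpa using lt_of_lt_of_le (mul_pos hc₁ hxs) this
  have hU : IsUnit Fhh := hpd.isUnit
  obtain ⟨Fi, hFi1, hFi2⟩ : ∃ Fi, Fhh * Fi = 1 ∧ Fi * Fhh = 1 := by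
    rcases hU with ⟨u, rfl⟩
    exact ⟨↑u⁻¹, u.mul_inv, u.inv_mul⟩
  have hFG : Fhh * G = 1 := by
    calc Fhh * G = (Fhh * G * Fhh) * Fi := by rw [mul_assoc, hFi1, mul_one]
    _ = Fhh * Fi := by rw [hG1]
    _ = 1 := hFi1
  have hFv : Fhh.mulVec v = b := by
    rw [hv, Matrix.mulVec_mulVec, hFG, Matrix.one_mulVec]
  have hvb : v ⬝ᵥ b = v ⬝ᵥ Fhh.mulVec v := by rw [hFv]
  -- f(v) ≥ 0 gives vᵀ Fhh v ≤ vstarᵀ Fss vstar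
  have hfv0 : 0 ≤ ∫ x, ((h x ⬝ᵥ v) - (hstar x ⬝ᵥ vstar)) ^ 2 ∂μ :=
    integral_nonneg fun x => sq_nonneg _
  have hkeyv := key v
  have hquad : v ⬝ᵥ Fhh.mulVec v ≤ vstar ⬝ᵥ Fss.mulVec vstar := by
    rw [hkeyv, hvb] at hfv0; linarith
  have hnorm : c₁ * (∑ i, v i ^ 2) ≤ c₂ * (∑ i, vstar i ^ 2) :=
    le_trans (hmin v) (le_trans hquad (hmax vstar))
  refine ⟨v, ?_, ?_⟩
  · have h1 : (∑ i, v i ^ 2) ≤ (∑ i, vstar i ^ 2) * (c₂ / c₁) := by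
      rw [mul_div_assoc', le_div_iff₀ hc₁]
      linarith [hnorm]
    calc Real.sqrt (∑ i, v i ^ 2) ≤ Real.sqrt ((∑ i, vstar i ^ 2) * (c₂ / c₁)) :=
          Real.sqrt_le_sqrt h1
      _ = Real.sqrt (∑ i, vstar i ^ 2) * Real.sqrt (c₂ / c₁) :=
          Real.sqrt_mul (Finset.sum_nonneg fun i _ => sq_nonneg _) _
  · intro u
    rw [key u, key v, hvb]
    have hsymdot : ∀ a c : Fin k → ℝ, a ⬝ᵥ Fhh.mulVec c = c ⬝ᵥ Fhh.mulVec a := by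
      intro a c
      rw [Matrix.dotProduct_mulVec, ← Matrix.mulVec_transpose, hsym, dotProduct_comm]
    have hub : u ⬝ᵥ b = u ⬝ᵥ Fhh.mulVec v := by rw [hFv]
    have hexp : (u - v) ⬝ᵥ Fhh.mulVec (u - v)
        = u ⬝ᵥ Fhh.mulVec u - 2 * (u ⬝ᵥ Fhh.mulVec v) + v ⬝ᵥ Fhh.mulVec v := by
      rw [sub_dotProduct, Matrix.mulVec_sub, dotProduct_sub,
        dotProduct_sub, hsymdot v u]
      ring
    have hge : 0 ≤ (u - v) ⬝ᵥ Fhh.mulVec (u - v) :=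
      le_trans (by positivity) (hmin (u - v))
    rw [hexp] at hge
    rw [hub]
    linarith
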